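/- Let φ₋, φ₊ : ℕ≥1 → ℝ be two solutions of the discrete Schrödinger equation u(n+1) + u(n−1) + V(n) u(n) = λ u(n) whose discrete Wronskian W(φ₋, φ₊)(n) = φ₋(n) φ₊(n+1) − φ₋(n+1) φ₊(n) equals 1 for all n. Then for every integer L ≥ 1, ‖φ₋‖_L · ‖φ₊‖_L ≥ (L−1)/2, where ‖f‖_L² = Σ_{n=1}^{L} |f(n)|². -/

import Mathlib

lemma cs_aux (f g : ℕ → ℝ) (s : Finset ℕ) :
    ∑ n ∈ s, |f n| * |g n| ≤
      Real.sqrt (∑ n ∈ s, (f n)^2) * Real.sqrt (∑ n ∈ s, (g n)^2) := by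
  have h := Finset.sum_mul_sq_le_sq_mul_sq s (fun n => |f n|) (fun n => |g n|)
  simp only [sq_abs] at h
  have hx : 0 ≤ ∑ n ∈ s, |f n| * |g n| :=
    Finset.sum_nonneg fun n _ => mul_nonneg (abs_nonneg _) (abs_nonneg _)
  calc ∑ n ∈ s, |f n| * |g n|
      = Real.sqrt ((∑ n ∈ s, |f n| * |g n|)^2) := (Real.sqrt_sq hx).symm
    _ ≤ Real.sqrt ((∑ n ∈ s, (f n)^2) * (∑ n ∈ s, (g n)^2)) := Real.sqrt_le_sqrt h
    _ = _ := Real.sqrt_mul (Finset.sum_nonneg fun n _ => sq_nonneg _) _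

theorem stmt8 (V φm φp : ℕ → ℝ) (lam : ℝ)
    (heqm : ∀ n ≥ 1, φm (n+1) + φm (n-1) + V n * φm n = lam * φm n)
    (heqp : ∀ n ≥ 1, φp (n+1) + φp (n-1) + V n * φp n = lam * φp n)
    (hW : ∀ n ≥ 1, φm n * φp (n+1) - φm (n+1) * φp n = 1) :
    ∀ L : ℕ, 1 ≤ L →
      ((L:ℝ) - 1) / 2 ≤
        Real.sqrt (∑ n ∈ Finset.Icc 1 L, (φm n)^2) *
          Real.sqrt (∑ n ∈ Finset.Icc 1 L, (φp n)^2) := by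
  intro L hL
  set A := Real.sqrt (∑ n ∈ Finset.Icc 1 L, (φm n)^2) with hA
  set B := Real.sqrt (∑ n ∈ Finset.Icc 1 L, (φp n)^2) with hB
  set s : Finset ℕ := Finset.Icc 1 (L-1) with hs
  have hsubset : s ⊆ Finset.Icc 1 L := Finset.Icc_subset_Icc le_rfl (Nat.sub_le L 1)
  have hset : Finset.Icc 2 L = s.map (addRightEmbedding 1) := by
    ext m
    simp only [Finset.mem_map, Finset.mem_Icc, addRightEmbedding_apply, hs]
    constructor
    · intro h; exact ⟨m-1, ⟨by omega, by omega⟩, by omega⟩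
    · rintro ⟨a, ha, rfl⟩; omega
  have hshift : ∀ (f : ℕ → ℝ), ∑ n ∈ s, (f (n+1))^2 ≤ ∑ n ∈ Finset.Icc 1 L, (f n)^2 := by
    intro f
    have h1 : ∑ n ∈ s, (f (n+1))^2 = ∑ m ∈ Finset.Icc 2 L, (f m)^2 := by
      rw [hset, Finset.sum_map]; rfl
    rw [h1]
    apply Finset.sum_le_sum_of_subset_of_nonneg (Finset.Icc_subset_Icc (by omega) le_rfl)
    intros; positivity
  have hsub : ∀ (f : ℕ → ℝ), ∑ n ∈ s, (f n)^2 ≤ ∑ n ∈ Finset.Icc 1 L, (f n)^2 := by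
    intro f
    apply Finset.sum_le_sum_of_subset_of_nonneg hsubset
    intros; positivity
  have hA0 : 0 ≤ A := Real.sqrt_nonneg _
  have key : ((L:ℝ) - 1) ≤ 2 * (A * B) := by
    have h1 : ∀ n ∈ s, (1:ℝ) ≤ |φm n| * |φp (n+1)| + |φm (n+1)| * |φp n| := by
      intro n hn
      have hn1 : 1 ≤ n := (Finset.mem_Icc.mp hn).1
      have hw := hW n hn1
      calc (1:ℝ) = |φm n * φp (n+1) - φm (n+1) * φp n| := by rw [hw]; norm_num
        _ ≤ |φm n * φp (n+1)| + |φm (n+1) * φp n| := abs_sub _ _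
        _ = |φm n| * |φp (n+1)| + |φm (n+1)| * |φp n| := by rw [abs_mul, abs_mul]
    have hcard : (s.card : ℝ) = (L:ℝ) - 1 := by
      rw [hs, Nat.card_Icc]
      have h2 : L - 1 + 1 - 1 = L - 1 := by omega
      rw [h2, Nat.cast_sub hL]; simp
    have hsum : ((L:ℝ) - 1) ≤ ∑ n ∈ s, (|φm n| * |φp (n+1)| + |φm (n+1)| * |φp n|) := by
      calc ((L:ℝ) - 1) = ∑ n ∈ s, (1:ℝ) := by
            rw [Finset.sum_const, nsmul_eq_mul, mul_one, hcard]
        _ ≤ _ := Finset.sum_le_sum h1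
    rw [Finset.sum_add_distrib] at hsum
    have t1 : ∑ n ∈ s, |φm n| * |φp (n+1)| ≤ A * B := by
      calc ∑ n ∈ s, |φm n| * |(fun k => φp (k+1)) n|
          ≤ Real.sqrt (∑ n ∈ s, (φm n)^2) * Real.sqrt (∑ n ∈ s, (φp (n+1))^2) :=
            cs_aux φm (fun k => φp (k+1)) s
        _ ≤ A * B :=
            mul_le_mul (Real.sqrt_le_sqrt (hsub φm)) (Real.sqrt_le_sqrt (hshift φp))
              (Real.sqrt_nonneg _) hA0
    have t2 : ∑ n ∈ s, |φm (n+1)| * |φp n| ≤ A * B := by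
      calc ∑ n ∈ s, |(fun k => φm (k+1)) n| * |φp n|
          ≤ Real.sqrt (∑ n ∈ s, (φm (n+1))^2) * Real.sqrt (∑ n ∈ s, (φp n)^2) :=
            cs_aux (fun k => φm (k+1)) φp s
        _ ≤ A * B :=
            mul_le_mul (Real.sqrt_le_sqrt (hshift φm)) (Real.sqrt_le_sqrt (hsub φp))
              (Real.sqrt_nonneg _) hA0
    linarith
  linarith
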